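/- The Lehner Gauss map L on [1,2), defined by L(x) = 1/(2−x) for x ∈ [1, 3/2) and L(x) = 1/(x−1) for x ∈ [3/2, 2), preserves the measure with density 1/(x−1) with respect to Lebesgue measure; that is, for every Borel set A ⊆ [1,2), ∫_{L⁻¹(A)} dx/(x−1) = ∫_A dx/(x−1). -/

import Mathlib

open MeasureTheory

/-- The Lehner Gauss map on [1,2). -/
noncomputable def lehnerMap (x : ℝ) : ℝ :=
  if x < 3 / 2 then 1 / (2 - x) else 1 / (x - 1)

/-- 1D lintegral change of variables. -/
theorem lintegral_image_eq_lintegral_abs_deriv_mul' {s : Set ℝ} {f : ℝ → ℝ} {f' : ℝ → ℝ}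
    (hs : MeasurableSet s) (hf' : ∀ x ∈ s, HasDerivWithinAt f (f' x) s x)
    (hf : Set.InjOn f s) (g : ℝ → ENNReal) :
    ∫⁻ x in f '' s, g x = ∫⁻ x in s, ENNReal.ofReal |f' x| * g (f x) := by
  simpa only [ContinuousLinearMap.det_toSpanSingleton] using
    lintegral_image_eq_lintegral_abs_det_fderiv_mul volume hs
      (fun x hx => (hf' x hx).hasFDerivWithinAt) hf g

theorem lehner_aux (A : Set ℝ) (hA : MeasurableSet A) (hA2 : A ⊆ Set.Ioo (1 : ℝ) 2) :
    ∫⁻ x in lehnerMap ⁻¹' A ∩ Set.Ico (1 : ℝ) 2, ENNReal.ofReal (1 / (x - 1)) =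
      ∫⁻ x in A, ENNReal.ofReal (1 / (x - 1)) := by
  set g1 : ℝ → ℝ := fun y => 2 - 1 / y with hg1
  set g2 : ℝ → ℝ := fun y => 1 + 1 / y with hg2
  -- image descriptions
  have himg1 : g1 '' A = (fun x => 1 / (2 - x)) ⁻¹' A ∩ Set.Ioo 1 (3/2) := by
    ext x
    constructor
    · rintro ⟨y, hy, rfl⟩
      obtain ⟨hy1, hy2⟩ := hA2 hy
      have hy0 : (0:ℝ) < y := by linarith
      constructor
      · have : 2 - (2 - 1 / y) = 1 / y := by ring
        simp only [Set.mem_preimage, hg1, this, one_div_one_div]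
        exact hy
      · constructor
        · have : 1 / y < 1 := by rw [div_lt_one hy0]; linarith
          simp only [hg1]; linarith
        · have : 1 / 2 < 1 / y := by
            rw [div_lt_div_iff₀ (by norm_num) hy0]; linarith
          simp only [hg1]; linarith
    · rintro ⟨hmem, hx1, hx2⟩
      refine ⟨1 / (2 - x), hmem, ?_⟩
      have hx0 : (0:ℝ) < 2 - x := by linarith
      simp only [hg1, one_div_one_div]
      ring
  have himg2 : g2 '' A = (fun x => 1 / (x - 1)) ⁻¹' A ∩ Set.Ioo (3/2) 2 := by
    ext x
    constructor
    · rintro ⟨y, hy, rfl⟩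
      obtain ⟨hy1, hy2⟩ := hA2 hy
      have hy0 : (0:ℝ) < y := by linarith
      constructor
      · have : (1 + 1 / y) - 1 = 1 / y := by ring
        simp only [Set.mem_preimage, hg2, this, one_div_one_div]
        exact hy
      · constructor
        · have : 1 / 2 < 1 / y := by
            rw [div_lt_div_iff₀ (by norm_num) hy0]; linarith
          simp only [hg2]; linarith
        · have : 1 / y < 1 := by rw [div_lt_one hy0]; linarith
          simp only [hg2]; linarith
    · rintro ⟨hmem, hx1, hx2⟩
      refine ⟨1 / (x - 1), hmem, ?_⟩
      have hx0 : (0:ℝ) < x - 1 := by linarith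
      simp only [hg2, one_div_one_div]
      ring
  -- splitting the preimage
  have hsplit : lehnerMap ⁻¹' A ∩ Set.Ico (1 : ℝ) 2 = g1 '' A ∪ g2 '' A := by
    rw [himg1, himg2]
    ext x
    constructor
    · rintro ⟨hmem, hx1, hx2⟩
      simp only [Set.mem_preimage, lehnerMap] at hmem
      by_cases hc : x < 3/2
      · rw [if_pos hc] at hmem
        left
        refine ⟨hmem, ?_, hc⟩
        -- show 1 < x : since 1/(2-x) ∈ A ⊆ Ioo 1 2, 1 < 1/(2-x)
        obtain ⟨h1, _⟩ := hA2 hmem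
        by_contra hle
        push_neg at hle
        have hx0 : (0:ℝ) < 2 - x := by linarith
        have : 1 / (2 - x) ≤ 1 := by
          rw [div_le_one hx0]; linarith
        linarith
      · rw [if_neg hc] at hmem
        push_neg at hc
        right
        refine ⟨hmem, ?_, hx2⟩
        obtain ⟨_, h2⟩ := hA2 hmem
        by_contra hle
        push_neg at hle
        have hx0 : (0:ℝ) < x - 1 := by linarith
        have : 2 ≤ 1 / (x - 1) := by
          rw [le_div_iff₀ hx0]; linarith
        linarith
    · rintro (⟨hmem, hx1, hx2⟩ | ⟨hmem, hx1, hx2⟩)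
      · refine ⟨?_, by linarith, by linarith⟩
        simp only [Set.mem_preimage, lehnerMap, if_pos hx2]
        exact hmem
      · refine ⟨?_, by linarith, by linarith⟩
        have : ¬ x < 3/2 := by linarith
        simp only [Set.mem_preimage, lehnerMap, if_neg this]
        exact hmem
  rw [hsplit]
  have hm1 : MeasurableSet (g1 '' A) := by
    rw [himg1]
    exact ((measurable_const.div (measurable_const.sub measurable_id)) hA).inter
      measurableSet_Ioo
  have hm2 : MeasurableSet (g2 '' A) := by
    rw [himg2]
    exact ((measurable_const.div (measurable_id.sub measurable_const)) hA).inter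
      measurableSet_Ioo
  have hdisj : Disjoint (g1 '' A) (g2 '' A) := by
    rw [himg1, himg2]
    refine Set.disjoint_left.mpr ?_
    rintro x ⟨_, _, h1⟩ ⟨_, h2, _⟩
    linarith
  rw [lintegral_union hm2 hdisj]
  -- change of variables on each piece
  have hcv1 : ∫⁻ x in g1 '' A, ENNReal.ofReal (1 / (x - 1)) =
      ∫⁻ y in A, ENNReal.ofReal |(y^2)⁻¹| * ENNReal.ofReal (1 / (g1 y - 1)) := by
    refine lintegral_image_eq_lintegral_abs_deriv_mul' hA (fun y hy => ?_) ?_ _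
    · have hy0 : y ≠ 0 := by have := (hA2 hy).1; intro h; rw [h] at this; linarith
      have : HasDerivAt g1 ((y^2)⁻¹) y := by
        simp only [hg1, one_div]
        simpa using ((hasDerivAt_inv hy0).const_sub 2)
      exact this.hasDerivWithinAt
    · intro a ha b hb hab
      have ha0 : a ≠ 0 := by have := (hA2 ha).1; intro h; rw [h] at this; linarith
      have hb0 : b ≠ 0 := by have := (hA2 hb).1; intro h; rw [h] at this; linarith
      simp only [hg1] at hab
      field_simp at hab
      linarith
  have hcv2 : ∫⁻ x in g2 '' A, ENNReal.ofReal (1 / (x - 1)) =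
      ∫⁻ y in A, ENNReal.ofReal |(-(y^2)⁻¹)| * ENNReal.ofReal (1 / (g2 y - 1)) := by
    refine lintegral_image_eq_lintegral_abs_deriv_mul' hA (fun y hy => ?_) ?_ _
    · have hy0 : y ≠ 0 := by have := (hA2 hy).1; intro h; rw [h] at this; linarith
      have : HasDerivAt g2 (-(y^2)⁻¹) y := by
        simp only [hg2, one_div]
        simpa using ((hasDerivAt_inv hy0).const_add 1)
      exact this.hasDerivWithinAt
    · intro a ha b hb hab
      have ha0 : a ≠ 0 := by have := (hA2 ha).1; intro h; rw [h] at this; linarith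
      have hb0 : b ≠ 0 := by have := (hA2 hb).1; intro h; rw [h] at this; linarith
      simp only [hg2] at hab
      field_simp at hab
      linarith
  rw [hcv1, hcv2, ← lintegral_add_left]
  · refine setLIntegral_congr_fun hA (fun y hy => ?_)
    obtain ⟨hy1, hy2⟩ := hA2 hy
    have hy0 : (0:ℝ) < y := by linarith
    have hy1' : (0:ℝ) < y - 1 := by linarith
    have hsq : (0:ℝ) < (y^2)⁻¹ := by positivity
    rw [abs_of_pos hsq, abs_neg, abs_of_pos hsq]
    have e1 : g1 y - 1 = (y - 1) / y := by simp only [hg1]; field_simp; ring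
    have e2 : g2 y - 1 = 1 / y := by simp only [hg2]; ring
    rw [e1, e2, one_div_one_div, one_div_div]
    rw [← ENNReal.ofReal_mul hsq.le, ← ENNReal.ofReal_mul hsq.le,
      ← ENNReal.ofReal_add (by positivity) (by positivity)]
    congr 1
    field_simp
    ring
  · simp only [hg1]
    exact ((ENNReal.measurable_ofReal.comp (measurable_abs.comp
      ((measurable_id.pow_const 2).inv))).mul (ENNReal.measurable_ofReal.comp
      (measurable_const.div ((measurable_const.sub
        (measurable_const.div measurable_id)).sub measurable_const))))

/-- The Lehner Gauss map preserves the measure with density 1/(x-1) on [1,2). -/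
theorem lehnerMap_invariant_measure :
    ∀ A : Set ℝ, MeasurableSet A → A ⊆ Set.Ico (1 : ℝ) 2 →
      ∫⁻ x in lehnerMap ⁻¹' A ∩ Set.Ico (1 : ℝ) 2, ENNReal.ofReal (1 / (x - 1)) =
      ∫⁻ x in A, ENNReal.ofReal (1 / (x - 1)) := by
  intro A hA hAsub
  set B := A ∩ Set.Ioo (1 : ℝ) 2 with hB
  have hBsub : B ⊆ Set.Ioo (1 : ℝ) 2 := Set.inter_subset_right
  have hBm : MeasurableSet B := hA.inter measurableSet_Ioo
  have hABdiff : A \ B ⊆ {1} := by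
    rintro x ⟨hxA, hxB⟩
    obtain ⟨h1, h2⟩ := hAsub hxA
    simp only [hB, Set.mem_inter_iff, Set.mem_Ioo, not_and, not_lt] at hxB
    have := hxB hxA
    by_contra h
    simp only [Set.mem_singleton_iff] at h
    rcases lt_or_eq_of_le h1 with h1' | h1'
    · have := this h1'; linarith
    · exact h h1'.symm
  have haeAB : A =ᵐ[volume] B := by
    rw [MeasureTheory.ae_eq_set]
    constructor
    · exact measure_mono_null hABdiff (Real.volume_singleton)
    · exact measure_mono_null (fun x hx => absurd hx.1.1 hx.2) measure_empty
  have haePre : ((lehnerMap ⁻¹' A ∩ Set.Ico (1 : ℝ) 2 : Set ℝ)) =ᵐ[volume]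
      ((lehnerMap ⁻¹' B ∩ Set.Ico (1 : ℝ) 2 : Set ℝ)) := by
    rw [MeasureTheory.ae_eq_set]
    constructor
    · refine measure_mono_null (fun x hx => ?_) (Real.volume_singleton (a := 1))
      obtain ⟨⟨hxp, hxI⟩, hxn⟩ := hx
      have hxnB : lehnerMap x ∉ B := fun h => hxn ⟨h, hxI⟩
      have hL1 : lehnerMap x ∈ A \ B := ⟨hxp, hxnB⟩
      have : lehnerMap x = 1 := hABdiff hL1
      -- deduce x = 1
      obtain ⟨h1, h2⟩ := hxI
      simp only [lehnerMap] at this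
      by_cases hc : x < 3/2
      · rw [if_pos hc] at this
        have hx0 : (0:ℝ) < 2 - x := by linarith
        have : (2:ℝ) - x = 1 := by
          field_simp at this; linarith
        simp only [Set.mem_singleton_iff]; linarith
      · rw [if_neg hc] at this
        push_neg at hc
        have hx0 : (0:ℝ) < x - 1 := by linarith
        have : x - 1 = 1 := by field_simp at this; linarith
        linarith
    · refine measure_mono_null (fun x hx => ?_) (measure_empty (μ := volume))
      obtain ⟨⟨hxp, hxI⟩, hxn⟩ := hx
      exact absurd ⟨hxp.1, hxI⟩ hxn
  rw [setLIntegral_congr haeAB, setLIntegral_congr haePre]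
  exact lehner_aux B hBm hBsub
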